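/- Let F_n be the friendship graph with center c and n triangles. The visibility polynomial of F_n is V(F_n)(x) = (1+x)^{2n} + x + 2n·x^2 + n·x^3. -/

import Mathlib

open SimpleGraph Polynomial

/-- Two vertices `u` and `v` are `X`-visible in `G` if some shortest `u`–`v` path
has no internal vertex in `X`, i.e. its support meets `X` only possibly in `{u, v}`. -/
def XVisible {V : Type*} (G : SimpleGraph V) (X : Set V) (u v : V) : Prop :=
  ∃ p : G.Walk u v, p.IsPath ∧ p.length = G.dist u v ∧
    ∀ w ∈ p.support, w ∈ X → w = u ∨ w = v

/-- `X` is a mutual-visibility set of `G` if every pair of vertices of `X` is `X`-visible. -/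
def MutualVisibilitySet {V : Type*} (G : SimpleGraph V) (X : Set V) : Prop :=
  ∀ u ∈ X, ∀ v ∈ X, XVisible G X u v

open Classical in
/-- The visibility polynomial: `∑ m_k x^k` where `m_k` is the number of
mutual-visibility sets of cardinality `k`. -/
noncomputable def visPoly {V : Type*} [Fintype V] (G : SimpleGraph V) : Polynomial ℕ :=
  ∑ S ∈ Finset.univ.powerset.filter (fun S : Finset V => MutualVisibilitySet G ↑S),
    Polynomial.X ^ S.card

/-- The wheel graph with rim `cycleGraph m` (on `some`-vertices) and hub `none`. -/
def wheelGraph (m : ℕ) : SimpleGraph (Option (Fin m)) :=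
  SimpleGraph.fromRel (fun u v =>
    (u = none ∧ v ≠ none) ∨
    ∃ i j : Fin m, u = some i ∧ v = some j ∧ (SimpleGraph.cycleGraph m).Adj i j)

/-- The shell graph with path `pathGraph m` (on `some`-vertices) and apex `none`. -/
def shellGraph (m : ℕ) : SimpleGraph (Option (Fin m)) :=
  SimpleGraph.fromRel (fun u v =>
    (u = none ∧ v ≠ none) ∨
    ∃ i j : Fin m, u = some i ∧ v = some j ∧ (SimpleGraph.pathGraph m).Adj i j)

/-- The bow graph: apex `none` joined to two disjoint paths of `a` and `b` vertices. -/
def bowGraph (a b : ℕ) : SimpleGraph (Option (Fin a ⊕ Fin b)) :=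
  SimpleGraph.fromRel (fun u v =>
    (u = none ∧ v ≠ none) ∨
    (∃ i j : Fin a, u = some (Sum.inl i) ∧ v = some (Sum.inl j) ∧ (SimpleGraph.pathGraph a).Adj i j) ∨
    (∃ i j : Fin b, u = some (Sum.inr i) ∧ v = some (Sum.inr j) ∧ (SimpleGraph.pathGraph b).Adj i j))

/-- The friendship graph: center `none`; the `i`-th triangle has the two
noncentral vertices `some (i, 0)` and `some (i, 1)`. -/
def friendshipGraph (n : ℕ) : SimpleGraph (Option (Fin n × Fin 2)) :=
  SimpleGraph.fromRel (fun u v =>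
    (u = none ∧ v ≠ none) ∨
    ∃ (i : Fin n) (x y : Fin 2), u = some (i, x) ∧ v = some (i, y) ∧ x ≠ y)

/-- The helm graph: a copy of the wheel (the `Sum.inl`-vertices) together with a
pendant vertex `Sum.inr k` attached to each rim vertex `Sum.inl (some k)`. -/
def helmGraph (m : ℕ) : SimpleGraph (Option (Fin m) ⊕ Fin m) :=
  SimpleGraph.fromRel (fun u v =>
    (∃ x y : Option (Fin m), u = Sum.inl x ∧ v = Sum.inl y ∧ (wheelGraph m).Adj x y) ∨
    (∃ k : Fin m, u = Sum.inl (some k) ∧ v = Sum.inr k))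

/-- `W` is a `c_Q`-visible set: `W ⊆ V \ Q`, every pair of vertices of `W` is
`Q`-visible, and `{u, w}` is `Q`-visible for all `u ∈ Q`, `w ∈ W`. -/
def CQVisible {V : Type*} (G : SimpleGraph V) (Q W : Set V) : Prop :=
  W ⊆ Qᶜ ∧ (∀ u ∈ W, ∀ v ∈ W, XVisible G Q u v) ∧ (∀ u ∈ Q, ∀ w ∈ W, XVisible G Q u w)

/-- An absolute `c_Q`-visible set: a `c_Q`-visible set for which `Q` is moreover a
mutual-visibility set of `G`. -/
def AbsoluteCQVisible {V : Type*} (G : SimpleGraph V) (Q W : Set V) : Prop :=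
  CQVisible G Q W ∧ MutualVisibilitySet G Q


section FriendAux
namespace FriendAux
variable {n : ℕ}

lemma adj_none_some (a : Fin n × Fin 2) : (friendshipGraph n).Adj none (some a) := by
  simp [friendshipGraph, SimpleGraph.fromRel_adj]

lemma not_adj_cross {i j : Fin n} {x y : Fin 2} (h : i ≠ j) :
    ¬ (friendshipGraph n).Adj (some (i, x)) (some (j, y)) := by
  simp only [friendshipGraph, SimpleGraph.fromRel_adj]
  rintro ⟨hne, (⟨h1, -⟩ | ⟨k, a, b, h1, h2, -⟩) | (⟨h1, -⟩ | ⟨k, a, b, h1, h2, -⟩)⟩ <;>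
    simp_all

/-- the canonical cross walk through the center -/
def crossWalk (i j : Fin n) (x y : Fin 2) :
    (friendshipGraph n).Walk (some (i, x)) (some (j, y)) :=
  Walk.cons ((adj_none_some (i, x)).symm) (Walk.cons (adj_none_some (j, y)) Walk.nil)

lemma dist_cross {i j : Fin n} {x y : Fin 2} (h : i ≠ j) :
    (friendshipGraph n).dist (some (i, x)) (some (j, y)) = 2 := by
  have hle : (friendshipGraph n).dist (some (i, x)) (some (j, y)) ≤ 2 :=
    (SimpleGraph.dist_le (crossWalk i j x y))
  have hne : (some (i, x) : Option (Fin n × Fin 2)) ≠ some (j, y) := by simp [h]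
  have h0 : (friendshipGraph n).dist (some (i, x)) (some (j, y)) ≠ 0 :=
    Nat.pos_iff_ne_zero.mp (Reachable.pos_dist_of_ne ⟨crossWalk i j x y⟩ hne)
  have h1 : (friendshipGraph n).dist (some (i, x)) (some (j, y)) ≠ 1 :=
    fun h1 => not_adj_cross h (SimpleGraph.dist_eq_one_iff_adj.mp h1)
  omega

lemma xvis_self (X : Set (Option (Fin n × Fin 2))) (u) : XVisible (friendshipGraph n) X u u :=
  ⟨Walk.nil, by simp, by simp [SimpleGraph.dist_self], by simp⟩

lemma xvis_of_adj {u v} (h : (friendshipGraph n).Adj u v) (X : Set (Option (Fin n × Fin 2))) :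
    XVisible (friendshipGraph n) X u v := by
  refine ⟨Walk.cons h Walk.nil, by simp [h.ne], ?_, by simp⟩
  exact (SimpleGraph.dist_eq_one_iff_adj.mpr h).symm

lemma xvis_cross {i j : Fin n} {x y : Fin 2} (h : i ≠ j) {X : Set (Option (Fin n × Fin 2))}
    (hX : none ∉ X) : XVisible (friendshipGraph n) X (some (i, x)) (some (j, y)) := by
  refine ⟨crossWalk i j x y, ?_, by simp [crossWalk, dist_cross h], ?_⟩
  · simp [crossWalk, Walk.isPath_def, h]
  · intro w hw hwX
    simp only [crossWalk, Walk.support_cons, Walk.support_nil, List.mem_cons] at hw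
    rcases hw with rfl | rfl | rfl | h' <;> simp_all

lemma none_not_mem {i j : Fin n} {x y : Fin 2} (h : i ≠ j)
    {X : Set (Option (Fin n × Fin 2))}
    (hv : XVisible (friendshipGraph n) X (some (i, x)) (some (j, y))) : none ∉ X := by
  obtain ⟨p, hp, hlen, hsup⟩ := hv
  rw [dist_cross h] at hlen
  intro hmem
  -- p has length 2; its middle vertex must be none
  cases p with
  | nil => simp at hlen
  | cons h1 q =>
    rename_i b
    cases q with
    | nil => simp at hlen
    | cons h2 r =>
      cases r with
      | nil =>
        -- b adjacent to both endpoints, i ≠ j, so b = none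
        have hb : b = none := by
          rcases b with _ | ⟨k, z⟩
          · rfl
          · exfalso
            rcases eq_or_ne k i with rfl | hk
            · exact not_adj_cross h h2
            · exact not_adj_cross hk h1.symm
        subst hb
        have := hsup none (by simp) hmem
        simp at this
      | cons h3 r' => simp at hlen

lemma adj_same {i : Fin n} {x y : Fin 2} (h : x ≠ y) :
    (friendshipGraph n).Adj (some (i, x)) (some (i, y)) := by
  refine ⟨by simpa using h, ?_⟩
  exact Or.inl (Or.inr ⟨i, x, y, rfl, rfl, h⟩)

lemma mvs_iff (S : Finset (Option (Fin n × Fin 2))) :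
    MutualVisibilitySet (friendshipGraph n) ↑S ↔
      (none ∉ S ∨ ∀ i x j y, some (i, x) ∈ S → some (j, y) ∈ S → i = j) := by
  constructor
  · intro h
    by_cases hn : none ∈ S
    · right
      intro i x j y hu hv
      by_contra hij
      exact none_not_mem hij (h _ (Finset.mem_coe.mpr hu) _ (Finset.mem_coe.mpr hv)) hn
    · exact Or.inl hn
  · intro h u hu v hv
    rcases u with _ | ⟨i, x⟩
    · rcases v with _ | ⟨j, y⟩
      · exact xvis_self _ _
      · exact xvis_of_adj (adj_none_some _) _
    · rcases v with _ | ⟨j, y⟩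
      · exact xvis_of_adj (adj_none_some _).symm _
      · rcases eq_or_ne i j with rfl | hij
        · rcases eq_or_ne x y with rfl | hxy
          · exact xvis_self _ _
          · exact xvis_of_adj (adj_same hxy) _
        · rcases h with h | h
          · exact xvis_cross hij h
          · exact absurd (h i x j y (Finset.mem_coe.mp hu) (Finset.mem_coe.mp hv)) hij

end FriendAux
end FriendAux

lemma sum_powerset_pow {α : Type*} [DecidableEq α] (t : Finset α) :
    ∑ S ∈ t.powerset, (Polynomial.X : Polynomial ℕ) ^ S.card =
      (1 + Polynomial.X) ^ t.card := by
  have h := Finset.prod_add (fun _ : α => (Polynomial.X : Polynomial ℕ)) (fun _ => 1) t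
  simp only [Finset.prod_const, mul_one, one_pow] at h
  rw [add_comm]
  exact h.symm


open FriendAux in
theorem visPoly_friendship (n : ℕ) :
    visPoly (friendshipGraph n) =
      (1 + Polynomial.X) ^ (2 * n) + Polynomial.X +
        Polynomial.C (2 * n) * Polynomial.X ^ 2 +
        Polynomial.C n * Polynomial.X ^ 3 := by
  classical
  rw [visPoly]
  rw [← Finset.sum_filter_add_sum_filter_not _ (fun S => none ∉ S), Finset.filter_filter,
    Finset.filter_filter]
  have h1 : Finset.univ.powerset.filter
      (fun S : Finset (Option (Fin n × Fin 2)) => MutualVisibilitySet (friendshipGraph n) ↑S ∧ none ∉ S)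
      = (Finset.univ.erase none).powerset := by
    ext S
    simp only [Finset.mem_filter, Finset.mem_powerset, Finset.subset_univ, true_and,
      Finset.subset_erase, FriendAux.mvs_iff]
    tauto
  have h2 : Finset.univ.powerset.filter
      (fun S : Finset (Option (Fin n × Fin 2)) => MutualVisibilitySet (friendshipGraph n) ↑S ∧ ¬ none ∉ S)
      = insert {none}
          ((Finset.univ.image fun a : Fin n × Fin 2 => ({none, some a} : Finset (Option (Fin n × Fin 2)))) ∪
           (Finset.univ.image fun i : Fin n =>
             ({none, some (i, 0), some (i, 1)} : Finset (Option (Fin n × Fin 2))))) := by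
    ext S
    simp only [Finset.mem_filter, Finset.mem_powerset, Finset.subset_univ, true_and, not_not,
      FriendAux.mvs_iff, Finset.mem_insert, Finset.mem_union, Finset.mem_image, Finset.mem_univ, true_and]
    constructor
    · rintro ⟨h | hsame, hn⟩
      · exact absurd hn h
      · by_cases hA : ∃ a : Fin n × Fin 2, some a ∈ S
        · obtain ⟨⟨i, x⟩, ha⟩ := hA
          have hsub : S ⊆ {none, some (i, 0), some (i, 1)} := by
            intro s hs
            rcases s with _ | ⟨j, y⟩
            · simp
            · have : j = i := hsame j y i x hs ha
              subst this
              have : y = 0 ∨ y = 1 := by omega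
              rcases this with rfl | rfl <;> simp
          by_cases h0 : some (i, 0) ∈ S <;> by_cases hh1 : some (i, 1) ∈ S
          · right; right
            refine ⟨i, Finset.Subset.antisymm_iff.mpr ⟨?_, hsub⟩⟩
            intro s hs
            simp only [Finset.mem_insert, Finset.mem_singleton] at hs
            rcases hs with rfl | rfl | rfl <;> assumption
          · right; left
            refine ⟨(i, 0), Finset.Subset.antisymm_iff.mpr ⟨?_, ?_⟩⟩
            · intro s hs
              simp only [Finset.mem_insert, Finset.mem_singleton] at hs
              rcases hs with rfl | rfl <;> assumption
            · intro s hs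
              have := hsub hs
              simp only [Finset.mem_insert, Finset.mem_singleton] at this ⊢
              rcases this with rfl | rfl | rfl
              · exact Or.inl rfl
              · exact Or.inr rfl
              · exact absurd hs hh1
          · right; left
            refine ⟨(i, 1), Finset.Subset.antisymm_iff.mpr ⟨?_, ?_⟩⟩
            · intro s hs
              simp only [Finset.mem_insert, Finset.mem_singleton] at hs
              rcases hs with rfl | rfl <;> assumption
            · intro s hs
              have := hsub hs
              simp only [Finset.mem_insert, Finset.mem_singleton] at this ⊢
              rcases this with rfl | rfl | rfl
              · exact Or.inl rfl
              · exact absurd hs h0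
              · exact Or.inr rfl
          · exfalso
            have : x = 0 ∨ x = 1 := by omega
            rcases this with rfl | rfl
            · exact h0 ha
            · exact hh1 ha
        · left
          apply Finset.Subset.antisymm_iff.mpr
          constructor
          · intro s hs
            rcases s with _ | a
            · simp
            · exact absurd ⟨a, hs⟩ hA
          · simp [hn]
    · rintro (rfl | ⟨a, rfl⟩ | ⟨i, rfl⟩)
      · refine ⟨Or.inr ?_, by simp⟩
        intro i x j y h h'; simp at h
      · refine ⟨Or.inr ?_, by simp⟩
        intro i x j y h h'
        simp at h h'
        exact congrArg Prod.fst (h.trans h'.symm)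
      · refine ⟨Or.inr ?_, by simp⟩
        intro j x k y h h'
        simp at h h'
        obtain ⟨hj, -⟩ | ⟨hj, -⟩ := h <;> obtain ⟨hk, -⟩ | ⟨hk, -⟩ := h' <;> rw [hj, hk]
  rw [h1, h2, sum_powerset_pow]
  have hcard : (Finset.univ.erase (none : Option (Fin n × Fin 2))).card = 2 * n := by
    rw [Finset.card_erase_of_mem (Finset.mem_univ _), Finset.card_univ]
    simp [Fintype.card_option, Fintype.card_prod]
    ring
  rw [hcard]
  have hnm : ({none} : Finset (Option (Fin n × Fin 2))) ∉
      ((Finset.univ.image fun a : Fin n × Fin 2 => ({none, some a} : Finset (Option (Fin n × Fin 2)))) ∪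
       (Finset.univ.image fun i : Fin n =>
         ({none, some (i, 0), some (i, 1)} : Finset (Option (Fin n × Fin 2))))) := by
    simp only [Finset.mem_union, Finset.mem_image, Finset.mem_univ, true_and, not_or, not_exists]
    constructor
    · intro a h
      have : some a ∈ ({none} : Finset (Option (Fin n × Fin 2))) := h ▸ (by simp)
      simp at this
    · intro i h
      have : some (i, 0) ∈ ({none} : Finset (Option (Fin n × Fin 2))) := h ▸ (by simp)
      simp at this
  rw [Finset.sum_insert hnm]
  have hdisj : Disjoint
      (Finset.univ.image fun a : Fin n × Fin 2 => ({none, some a} : Finset (Option (Fin n × Fin 2))))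
      (Finset.univ.image fun i : Fin n =>
        ({none, some (i, 0), some (i, 1)} : Finset (Option (Fin n × Fin 2)))) := by
    rw [Finset.disjoint_left]
    rintro T hT hT'
    simp only [Finset.mem_image, Finset.mem_univ, true_and] at hT hT'
    obtain ⟨a, rfl⟩ := hT
    obtain ⟨i, hi⟩ := hT'
    have c2 : ({none, some a} : Finset (Option (Fin n × Fin 2))).card = 2 := by
      rw [Finset.card_insert_of_notMem (by simp), Finset.card_singleton]
    have c3 : ({none, some (i,0), some (i,1)} : Finset (Option (Fin n × Fin 2))).card = 3 := by
      rw [Finset.card_insert_of_notMem (by simp), Finset.card_insert_of_notMem (by simp),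
        Finset.card_singleton]
    rw [hi] at c3
    omega
  rw [Finset.sum_union hdisj]
  rw [Finset.sum_image (by
    intro a _ b _ h
    have : some a ∈ ({none, some b} : Finset (Option (Fin n × Fin 2))) :=
      (show ({none, some a} : Finset (Option (Fin n × Fin 2))) = {none, some b} from h) ▸ (by simp)
    simpa using this)]
  rw [Finset.sum_image (by
    intro i _ j _ h
    have : some (i, 0) ∈ ({none, some (j,0), some (j,1)} : Finset (Option (Fin n × Fin 2))) :=
      (show ({none, some (i,0), some (i,1)} : Finset (Option (Fin n × Fin 2))) =
        {none, some (j,0), some (j,1)} from h) ▸ (by simp)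
    simp only [Finset.mem_insert, Finset.mem_singleton, Option.some.injEq, Prod.mk.injEq] at this
    tauto)]
  have e2 : ∀ a : Fin n × Fin 2,
      ({none, some a} : Finset (Option (Fin n × Fin 2))).card = 2 := fun a => by
    rw [Finset.card_insert_of_notMem (by simp), Finset.card_singleton]
  have e3 : ∀ i : Fin n,
      ({none, some (i,0), some (i,1)} : Finset (Option (Fin n × Fin 2))).card = 3 := fun i => by
    rw [Finset.card_insert_of_notMem (by simp), Finset.card_insert_of_notMem (by simp),
      Finset.card_singleton]
  simp only [e2, e3, Finset.sum_const, Finset.card_univ, Fintype.card_prod,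
    Fintype.card_fin, Finset.card_singleton, pow_one]
  have hC : ∀ m : ℕ, (Polynomial.C m : Polynomial ℕ) = (m : Polynomial ℕ) := fun m => by
    exact_mod_cast Polynomial.C_eq_natCast (m : ℕ)
  rw [hC, hC]
  simp only [nsmul_eq_mul]
  push_cast
  ring
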